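/- Let K be a field, T ∈ K with T ≠ 0, and m ≥ 1. Let L = K[z₁^{±1},…,z_m^{±1}] be the Laurent polynomial ring and W = z₁ + ⋯ + z_m + T·z₁^{-1}⋯z_m^{-1}. Then the Jacobian ring Jac(W) = L/(∂W/∂z₁, …, ∂W/∂z_m) is isomorphic as a K-algebra to K[w]/(w^{m+1} − T), via the map sending each z_i to the class of w. -/

import Mathlib

open Polynomial

/-- The Laurent polynomial ring `K[z₁^{±1},…,z_m^{±1}]`. -/
abbrev stmt10L (K : Type*) [Field K] (m : ℕ) : Type _ :=
  AddMonoidAlgebra K (Fin m →₀ ℤ)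

/-- The monomial `z^v` in the Laurent polynomial ring. -/
noncomputable def stmt10mono (K : Type*) [Field K] (m : ℕ) (v : Fin m →₀ ℤ) :
    stmt10L K m :=
  AddMonoidAlgebra.single v 1

noncomputable section Stmt10Aux
namespace Stmt10

variable {K : Type*} [Field K] (T : K) (m : ℕ)

/-- total degree -/
def tot (m : ℕ) : (Fin m →₀ ℤ) →+ ℤ := Finsupp.liftAddHom (fun _ => AddMonoidHom.id ℤ)

lemma tot_single (i : Fin m) (n : ℤ) : tot m (Finsupp.single i n) = n := by
  simp [tot]

lemma tot_sumsingle : tot m (∑ j, Finsupp.single j (1:ℤ)) = m := by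
  rw [map_sum]
  simp [tot_single]

abbrev B (K : Type*) [Field K] (T : K) (m : ℕ) : Type _ :=
  K[X] ⧸ Ideal.span {(X : K[X]) ^ (m + 1) - C T}

lemma mk_X_pow : (Ideal.Quotient.mk (Ideal.span {(X:K[X])^(m+1) - C T}) (X^(m+1)))
    = algebraMap K (B K T m) T := by
  have h : algebraMap K (B K T m) T = Ideal.Quotient.mk _ (C T) := rfl
  rw [h, Ideal.Quotient.mk_eq_mk_iff_sub_mem]
  exact Ideal.subset_span (by simp)

variable (hT : T ≠ 0)

/-- the class of `X` in `B` as a unit -/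
def u : (B K T m)ˣ where
  val := Ideal.Quotient.mk _ X
  inv := algebraMap K (B K T m) T⁻¹ * Ideal.Quotient.mk _ (X ^ m)
  val_inv := by
    rw [mul_comm, mul_assoc, ← map_mul, ← pow_succ, mk_X_pow, ← map_mul,
      inv_mul_cancel₀ hT, map_one]
  inv_val := by
    rw [mul_assoc, ← map_mul, ← pow_succ, mk_X_pow, ← map_mul,
      inv_mul_cancel₀ hT, map_one]

lemma u_pow : ((u T m hT : (B K T m)ˣ) : B K T m) ^ (m+1) = algebraMap K (B K T m) T := by
  rw [← mk_X_pow]; rfl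

/-- the algebra map `L → B` -/
def phi : stmt10L K m →ₐ[K] B K T m :=
  AddMonoidAlgebra.lift K (B K T m) (Fin m →₀ ℤ)
    ((Units.coeHom (B K T m)).comp ((zpowersHom (B K T m)ˣ (u T m hT)).comp
      (AddMonoidHom.toMultiplicative (tot m))))

lemma phi_mono (v : Fin m →₀ ℤ) :
    phi T m hT (stmt10mono K m v) = ((u T m hT ^ (tot m v) : (B K T m)ˣ) : B K T m) := by
  simp [phi, stmt10mono, AddMonoidAlgebra.lift_single]

/-- the ideal of partial derivatives -/
def I : Ideal (stmt10L K m) :=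
  Ideal.span (Set.range (fun i : Fin m =>
    (1 : stmt10L K m) - (algebraMap K (stmt10L K m) T) *
      stmt10mono K m (-(Finsupp.single i 1) - ∑ j, Finsupp.single j 1)))

abbrev A := stmt10L K m ⧸ I T m

def mk : stmt10L K m →+* A T m := Ideal.Quotient.mk _

lemma mono_mul (v w : Fin m →₀ ℤ) :
    stmt10mono K m v * stmt10mono K m w = stmt10mono K m (v + w) := by
  simp [stmt10mono, AddMonoidAlgebra.single_mul_single]

lemma mono_zero : stmt10mono K m 0 = 1 := rfl

lemma rel1 (i : Fin m) :
    algebraMap K (A T m) T *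
      mk T m (stmt10mono K m (-(Finsupp.single i 1) - ∑ j, Finsupp.single j 1)) = 1 := by
  have h : mk T m ((1 : stmt10L K m) - (algebraMap K (stmt10L K m) T) *
      stmt10mono K m (-(Finsupp.single i 1) - ∑ j, Finsupp.single j 1)) = 0 :=
    Ideal.Quotient.eq_zero_iff_mem.2 (Ideal.subset_span ⟨i, rfl⟩)
  simp only [map_sub, map_mul, map_one, sub_eq_zero] at h
  have ha : mk T m (algebraMap K (stmt10L K m) T) = algebraMap K (A T m) T := rfl
  rw [ha] at h
  exact h.symm

lemma rel2 (i : Fin m) :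
    mk T m (stmt10mono K m (Finsupp.single i 1 + ∑ j, Finsupp.single j 1))
      = algebraMap K (A T m) T := by
  have h := rel1 T m i
  have h2 : mk T m (stmt10mono K m (Finsupp.single i 1 + ∑ j, Finsupp.single j 1)) *
      (algebraMap K (A T m) T *
        mk T m (stmt10mono K m (-(Finsupp.single i 1) - ∑ j, Finsupp.single j 1)))
      = algebraMap K (A T m) T := by
    rw [mul_comm (algebraMap K (A T m) T), ← mul_assoc, ← map_mul, mono_mul]
    have : ((Finsupp.single i 1 : Fin m →₀ ℤ) + ∑ j, Finsupp.single j 1) +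
        (-(Finsupp.single i 1) - ∑ j, Finsupp.single j 1) = 0 := by abel
    rw [this, mono_zero, map_one, one_mul]
  rw [h, mul_one] at h2
  exact h2

/-- the class of the monomial `z^v` as a unit of `A` -/
def Au (v : Fin m →₀ ℤ) : (A T m)ˣ where
  val := mk T m (stmt10mono K m v)
  inv := mk T m (stmt10mono K m (-v))
  val_inv := by rw [← map_mul, mono_mul, add_neg_cancel, mono_zero, map_one]
  inv_val := by rw [← map_mul, mono_mul, neg_add_cancel, mono_zero, map_one]

lemma Au_mul (v w : Fin m →₀ ℤ) : Au T m v * Au T m w = Au T m (v + w) := by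
  ext
  exact (map_mul (mk T m) _ _).symm.trans (congrArg (mk T m) (mono_mul m v w))

/-- `Au` as a monoid hom -/
def AuHom : Multiplicative (Fin m →₀ ℤ) →* (A T m)ˣ where
  toFun v := Au T m (Multiplicative.toAdd v)
  map_one' := by ext; rfl
  map_mul' v w := (Au_mul T m _ _).symm

lemma Au_single_eq (i j : Fin m) : Au T m (Finsupp.single i 1) = Au T m (Finsupp.single j 1) := by
  have h : Au T m (Finsupp.single i 1 + ∑ k, Finsupp.single k 1)
      = Au T m (Finsupp.single j 1 + ∑ k, Finsupp.single k 1) := by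
    ext
    show mk T m _ = mk T m _
    rw [rel2, rel2]
  have h2 : Au T m (Finsupp.single i 1) * Au T m (∑ k, Finsupp.single k 1)
      = Au T m (Finsupp.single j 1) * Au T m (∑ k, Finsupp.single k 1) := by
    rw [Au_mul, Au_mul, h]
  exact mul_right_cancel h2

lemma Au_single_zpow (i : Fin m) (n : ℤ) :
    Au T m (Finsupp.single i n) = Au T m (Finsupp.single i 1) ^ n := by
  have : Finsupp.single i n = n • Finsupp.single i (1:ℤ) := by
    rw [Finsupp.smul_single, smul_eq_mul, mul_one]
  rw [this]
  have := map_zpow (AuHom T m) (Multiplicative.ofAdd (Finsupp.single i (1:ℤ))) n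
  simpa [AuHom, ← ofAdd_zsmul] using this

lemma Au_zpow (i0 : Fin m) (v : Fin m →₀ ℤ) :
    Au T m v = Au T m (Finsupp.single i0 1) ^ (tot m v) := by
  induction v using Finsupp.induction with
  | zero => simp [tot]; ext; rfl
  | single_add a b f _ _ ih =>
      rw [← Au_mul, ih, Au_single_zpow, Au_single_eq T m a i0, map_add, tot_single,
        ← zpow_add]

lemma mk_mono (i0 : Fin m) (v : Fin m →₀ ℤ) :
    mk T m (stmt10mono K m v) = ((Au T m (Finsupp.single i0 1) ^ (tot m v) : (A T m)ˣ) : A T m) := by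
  rw [← Au_zpow]; rfl

/-- phi kills the ideal -/
lemma phi_ker : ∀ a ∈ I T m, phi T m hT a = 0 := by
  intro a ha
  refine (Ideal.span_le.2 ?_ : I T m ≤ RingHom.ker (phi T m hT)) ha
  rintro _ ⟨i, rfl⟩
  simp only [RingHom.mem_ker, SetLike.mem_coe]
  rw [map_sub, map_one, map_mul, AlgHom.commutes, phi_mono]
  rw [map_sub, map_neg, tot_single, tot_sumsingle]
  have hz : (-1 - (m:ℤ)) = -((m+1 : ℕ) : ℤ) := by push_cast; ring
  rw [hz, zpow_neg, zpow_natCast, sub_eq_zero]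
  have hcoe : ((u T m hT ^ (m+1) : (B K T m)ˣ) : B K T m) = algebraMap K (B K T m) T := by
    rw [Units.val_pow_eq_pow_val, u_pow]
  calc (1 : B K T m) = ((u T m hT ^ (m+1) : (B K T m)ˣ) : B K T m) *
          (((u T m hT ^ (m+1))⁻¹ : (B K T m)ˣ) : B K T m) := by
        rw [← Units.val_mul, mul_inv_cancel, Units.val_one]
    _ = algebraMap K (B K T m) T * (((u T m hT ^ (m+1))⁻¹ : (B K T m)ˣ) : B K T m) := by
        rw [hcoe]

def phibar : A T m →ₐ[K] B K T m :=
  Ideal.Quotient.liftₐ (I T m) (phi T m hT) (phi_ker T m hT)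

lemma phibar_mk (x : stmt10L K m) : phibar T m hT (mk T m x) = phi T m hT x := rfl

variable (hm : 1 ≤ m)

/-- the class of `z_{i0}` -/
def z0 : A T m := mk T m (stmt10mono K m (Finsupp.single (⟨0, hm⟩ : Fin m) 1))

lemma z0_pow : z0 T m hm ^ (m+1) = algebraMap K (A T m) T := by
  set i0 : Fin m := ⟨0, hm⟩
  have h1 : z0 T m hm = ((Au T m (Finsupp.single i0 1) : (A T m)ˣ) : A T m) := rfl
  rw [h1, ← Units.val_pow_eq_pow_val]
  have h2 : (Au T m (Finsupp.single i0 1)) ^ (m+1)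
      = Au T m (Finsupp.single i0 1 + ∑ j, Finsupp.single j 1) := by
    rw [Au_zpow T m i0 (Finsupp.single i0 1 + ∑ j, Finsupp.single j 1), map_add,
      tot_single, tot_sumsingle, ← zpow_natCast]
    norm_num [add_comm]
  rw [h2]
  exact rel2 T m i0

/-- the inverse algebra map -/
def psi : B K T m →ₐ[K] A T m :=
  Ideal.Quotient.liftₐ _ (aeval (z0 T m hm)) (by
    intro a ha
    refine (Ideal.span_le.2 ?_ :
      Ideal.span {(X : K[X]) ^ (m + 1) - C T} ≤ RingHom.ker (aeval (z0 T m hm))) ha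
    intro p hp
    simp only [Set.mem_singleton_iff] at hp
    subst hp
    simp only [RingHom.mem_ker, SetLike.mem_coe, map_sub, map_pow, aeval_X, aeval_C]
    rw [z0_pow, sub_self])

lemma psi_mk (p : K[X]) : psi T m hm (Ideal.Quotient.mk _ p) = aeval (z0 T m hm) p := rfl

lemma comp1 : (phibar T m hT).comp (psi T m hm) = AlgHom.id K (B K T m) := by
  apply Ideal.Quotient.algHom_ext
  apply Polynomial.algHom_ext
  show phibar T m hT (psi T m hm (Ideal.Quotient.mk _ X)) = Ideal.Quotient.mk _ X
  rw [psi_mk, aeval_X]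
  show phibar T m hT (mk T m (stmt10mono K m (Finsupp.single (⟨0, hm⟩ : Fin m) 1)))
      = Ideal.Quotient.mk _ X
  rw [phibar_mk, phi_mono, tot_single, zpow_one]
  rfl

lemma comp2 : (psi T m hm).comp (phibar T m hT) = AlgHom.id K (A T m) := by
  apply Ideal.Quotient.algHom_ext
  apply AddMonoidAlgebra.algHom_ext
  case single_zero_left => exact Subsingleton.elim _ _
  intro v
  show psi T m hm (phibar T m hT (mk T m (stmt10mono K m v))) = mk T m (stmt10mono K m v)
  rw [phibar_mk, phi_mono]
  set i0 : Fin m := ⟨0, hm⟩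
  set Ψ : B K T m →* A T m := ((psi T m hm : B K T m →+* A T m) : B K T m →* A T m)
  have hunit : ∀ w : (B K T m)ˣ, psi T m hm ((w : B K T m)) = ((Units.map Ψ w : (A T m)ˣ) : A T m) := by
    intro w; rfl
  rw [hunit, map_zpow]
  have hu : Units.map Ψ (u T m hT) = Au T m (Finsupp.single i0 1) := by
    ext
    show psi T m hm (Ideal.Quotient.mk _ X) = _
    rw [psi_mk, aeval_X]
    rfl
  rw [hu, ← Au_zpow]
  rfl

lemma main : ∀ i : Fin m,
    (AlgEquiv.ofAlgHom (phibar T m hT) (psi T m hm) (comp1 T m hT hm) (comp2 T m hT hm))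
      (Ideal.Quotient.mk _ (stmt10mono K m (Finsupp.single i 1))) = Ideal.Quotient.mk _ X := by
  intro i
  show phibar T m hT (mk T m (stmt10mono K m (Finsupp.single i 1))) = _
  rw [phibar_mk, phi_mono, tot_single, zpow_one]
  rfl

end Stmt10
end Stmt10Aux

theorem stmt_10 (K : Type*) [Field K] (T : K) (hT : T ≠ 0) (m : ℕ) (hm : 1 ≤ m) :
    ∃ e : (stmt10L K m ⧸ Ideal.span (Set.range (fun i : Fin m =>
          (1 : stmt10L K m) -
            (algebraMap K (stmt10L K m) T) *
              stmt10mono K m (-(Finsupp.single i 1) - ∑ j, Finsupp.single j 1))))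
        ≃ₐ[K] (K[X] ⧸ Ideal.span {(X : K[X]) ^ (m + 1) - C T}),
      ∀ i : Fin m,
        e (Ideal.Quotient.mk _ (stmt10mono K m (Finsupp.single i 1))) =
          Ideal.Quotient.mk _ X := by
  exact ⟨_, Stmt10.main T m hT hm⟩
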